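/- The interval [0,1] is not a minimality detector for the triangle: letting T ⊂ [0,1]² be the union of the three closed line segments joining (0,0), (1,0), and (0,1), there exists a non-minimal sequence x̄ = (x_1,x_2,...) ∈ T^ℕ such that for every continuous function f : T → [0,1], the sequence (f(x_1),f(x_2),...) ∈ [0,1]^ℕ is minimal. -/

import Mathlib

open Set unitInterval

/-- The left shift `S` on sequences: `S(x₁,x₂,x₃,…) = (x₂,x₃,…)`. -/
def shiftSeq {X : Type*} (z : ℕ → X) : ℕ → X := fun n => z (n + 1)

/-- The closure of the forward shift-orbit `{z, Sz, S²z, …}` of a sequence `z`,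
inside the sequence space `ℕ → X`.  (For a compact metric space `X` the product
topology on `ℕ → X` is exactly the topology of the metric
`d̄(x̄,ȳ) = ∑ᵢ d(xᵢ,yᵢ)/2ⁱ`.) -/
def shiftOrbitClosure {X : Type*} [TopologicalSpace X] (z : ℕ → X) : Set (ℕ → X) :=
  closure (Set.range fun k => shiftSeq^[k] z)

/-- A sequence `z` is *minimal* if the closure of its shift-orbit is a minimal
dynamical system under the shift, i.e. every point of this closure has dense
forward orbit in it. -/
def IsMinimalSeq {X : Type*} [TopologicalSpace X] (z : ℕ → X) : Prop :=
  ∀ w ∈ shiftOrbitClosure z, shiftOrbitClosure z ⊆ shiftOrbitClosure w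

noncomputable section

/-- The plane with the Euclidean metric. -/
abbrev E2 := EuclideanSpace ℝ (Fin 2)

def p00 : E2 := !₂[0, 0]
def p10 : E2 := !₂[1, 0]
def p01 : E2 := !₂[0, 1]

/-- The triangle: the union of the three closed segments joining
`(0,0)`, `(1,0)` and `(0,1)`, as a subspace of the Euclidean plane. -/
def triangle : Set E2 := segment ℝ p00 p10 ∪ segment ℝ p00 p01 ∪ segment ℝ p10 p01



variable {X : Type*} [TopologicalSpace X]

lemma shiftSeq_iterate (z : ℕ → X) (k : ℕ) : shiftSeq^[k] z = fun n => z (n + k) := by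
  induction k with
  | zero => simp
  | succ k ih =>
    rw [Function.iterate_succ_apply', ih]
    funext n
    simp [shiftSeq]
    congr 1
    omega

lemma continuous_shiftSeq : Continuous (shiftSeq : (ℕ → X) → ℕ → X) :=
  continuous_pi fun n => continuous_apply (n + 1)

lemma self_mem_shiftOrbitClosure (z : ℕ → X) : z ∈ shiftOrbitClosure z :=
  subset_closure ⟨0, by simp⟩

lemma shift_iter_mem_shiftOrbitClosure (z : ℕ → X) (k : ℕ) :
    shiftSeq^[k] z ∈ shiftOrbitClosure z :=
  subset_closure ⟨k, rfl⟩

lemma shiftOrbitClosure_subset {z w : ℕ → X} (h : z ∈ shiftOrbitClosure w) :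
    shiftOrbitClosure z ⊆ shiftOrbitClosure w := by
  apply closure_minimal _ isClosed_closure
  rintro _ ⟨k, rfl⟩
  have hc : Continuous (shiftSeq^[k] : (ℕ → X) → ℕ → X) := continuous_shiftSeq.iterate k
  have h1 : shiftSeq^[k] z ∈ shiftSeq^[k] '' closure (Set.range fun j => shiftSeq^[j] w) :=
    mem_image_of_mem _ h
  have h2 := image_closure_subset_closure_image (s := Set.range fun j => shiftSeq^[j] w) hc h1
  refine closure_mono ?_ h2
  rintro _ ⟨_, ⟨j, rfl⟩, rfl⟩
  exact ⟨k + j, by simp only [Function.iterate_add_apply]⟩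


lemma shift_mem_of_mem {z w : ℕ → X} (h : z ∈ shiftOrbitClosure w) (k : ℕ) :
    shiftSeq^[k] z ∈ shiftOrbitClosure w :=
  shiftOrbitClosure_subset h (shift_iter_mem_shiftOrbitClosure z k)

/-- window approximation implies closure membership, in a metric-space-valued product. -/
lemma mem_closure_range_of_windows {Y : Type*} [PseudoMetricSpace Y] {g : ℕ → ℕ → Y} {y : ℕ → Y}
    (h : ∀ ε > (0:ℝ), ∀ N : ℕ, ∃ k, ∀ n ≤ N, dist (y n) (g k n) < ε) :
    y ∈ closure (Set.range g) := by
  rw [mem_closure_iff]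
  intro o ho hyo
  rcases (isOpen_pi_iff.mp ho) y hyo with ⟨Io, u, hu, hsub⟩
  by_cases hI : Io.Nonempty
  · set N := Io.max' hI with hN
    -- for each a ∈ Io pick a ball
    have hb : ∀ a ∈ Io, ∃ ε > (0:ℝ), Metric.ball (y a) ε ⊆ u a := by
      intro a ha
      rcases Metric.isOpen_iff.mp (hu a ha).1 (y a) (hu a ha).2 with ⟨ε, hε, hball⟩
      exact ⟨ε, hε, hball⟩
    choose ε hε hball using hb
    have hpos : 0 < (Io.inf' hI fun a => if ha : a ∈ Io then ε a ha else 1) := by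
      rw [Finset.lt_inf'_iff]
      intro a ha
      simp [ha, hε a ha]
    rcases h _ hpos N with ⟨k, hk⟩
    refine ⟨g k, ?_, ⟨k, rfl⟩⟩
    apply hsub
    intro a ha
    have ha' : a ∈ Io := Finset.mem_coe.mp ha
    have h1 : dist (y a) (g k a) < Io.inf' hI fun a => if ha : a ∈ Io then ε a ha else 1 :=
      hk a (Io.le_max' a ha')
    have h2 : (Io.inf' hI fun a => if ha : a ∈ Io then ε a ha else 1) ≤ ε a ha' := by
      have h3 := Finset.inf'_le (fun b => if hb : b ∈ Io then ε b hb else 1) ha'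
      rwa [dif_pos ha'] at h3
    exact hball a ha' (by rw [Metric.mem_ball, dist_comm]; linarith)
  · rcases h 1 one_pos 0 with ⟨k, _⟩
    refine ⟨g k, ?_, ⟨k, rfl⟩⟩
    apply hsub
    intro a ha
    exact absurd ⟨a, Finset.mem_coe.mp ha⟩ hI

lemma windows_of_mem_closure_range {Y : Type*} [PseudoMetricSpace Y] {g : ℕ → ℕ → Y} {y : ℕ → Y}
    (h : y ∈ closure (Set.range g)) :
    ∀ ε > (0:ℝ), ∀ N : ℕ, ∃ k, ∀ n ≤ N, dist (y n) (g k n) < ε := by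
  intro ε hε N
  have ho : IsOpen {z : ℕ → Y | ∀ n ∈ Finset.range (N+1), dist (y n) (z n) < ε} := by
    have : {z : ℕ → Y | ∀ n ∈ Finset.range (N+1), dist (y n) (z n) < ε} =
        ⋂ n ∈ Finset.range (N+1), (fun z : ℕ → Y => z n) ⁻¹' (Metric.ball (y n) ε) := by
      ext z
      simp [Metric.mem_ball, dist_comm]
    rw [this]
    exact isOpen_biInter_finset fun n _ =>
      (Metric.isOpen_ball).preimage (continuous_apply n)
  rcases (mem_closure_iff.mp h) _ ho (by simp [hε]) with ⟨_, hz, ⟨k, rfl⟩⟩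
  exact ⟨k, fun n hn => hz n (Finset.mem_range.mpr (by omega))⟩


section AUX_a2
lemma p00_mem : p00 ∈ triangle := Or.inl (Or.inl (left_mem_segment ℝ p00 p10))
lemma p10_mem : p10 ∈ triangle := Or.inl (Or.inl (right_mem_segment ℝ p00 p10))
lemma p01_mem : p01 ∈ triangle := Or.inl (Or.inr (right_mem_segment ℝ p00 p01))

def vtxE : Fin 3 → E2 := ![p00, p10, p01]

lemma vtxE_mem (i : Fin 3) : vtxE i ∈ triangle := by
  fin_cases i
  · exact p00_mem
  · exact p10_mem
  · exact p01_mem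

def vtx (i : Fin 3) : triangle := ⟨vtxE i, vtxE_mem i⟩

/-- point on the edge opposite to vertex `i` -/
def epE (i : Fin 3) (s : ℝ) : E2 := (1 - s) • vtxE (i + 1) + s • vtxE (i + 2)

lemma epE_mem (i : Fin 3) (s : ℝ) (h0 : 0 ≤ s) (h1 : s ≤ 1) : epE i s ∈ triangle := by
  fin_cases i
  · exact Or.inr ⟨1 - s, s, by linarith, h0, by ring, rfl⟩
  · refine Or.inl (Or.inr ?_)
    rw [segment_symm]
    exact ⟨1 - s, s, by linarith, h0, by ring, rfl⟩
  · exact Or.inl (Or.inl ⟨1 - s, s, by linarith, h0, by ring, rfl⟩)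

def ep (i : Fin 3) (s : I) : triangle := ⟨epE i s, epE_mem i s s.2.1 s.2.2⟩

def qt : triangle := ep 2 ⟨1/2, by norm_num, by norm_num⟩

lemma coord_dist_le (a b : E2) (i : Fin 2) : |a i - b i| ≤ dist a b := by
  rw [EuclideanSpace.dist_eq]
  have h1 : dist (a i) (b i) ^ 2 ≤ ∑ j : Fin 2, dist (a j) (b j) ^ 2 :=
    Finset.single_le_sum (f := fun j => dist (a j) (b j) ^ 2)
      (fun j _ => sq_nonneg _) (Finset.mem_univ i)
  have h2 : |a i - b i| = Real.sqrt (dist (a i) (b i) ^ 2) := by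
    rw [Real.sqrt_sq dist_nonneg, Real.dist_eq]
  rw [h2]
  exact Real.sqrt_le_sqrt h1

lemma dist_le_coords (a b : E2) : dist a b ≤ |a 0 - b 0| + |a 1 - b 1| := by
  rw [EuclideanSpace.dist_eq, Fin.sum_univ_two, Real.dist_eq, Real.dist_eq]
  have h := Real.sqrt_le_sqrt (show |a 0 - b 0|^2 + |a 1 - b 1|^2 ≤ (|a 0 - b 0| + |a 1 - b 1|)^2 by
    nlinarith [abs_nonneg (a 0 - b 0), abs_nonneg (a 1 - b 1)])
  calc Real.sqrt (|a 0 - b 0| ^ 2 + |a 1 - b 1| ^ 2) ≤ _ := h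
    _ = _ := Real.sqrt_sq (by positivity)

lemma ep_far0 (s : I) : 1/4 ≤ dist (ep 0 s) (vtx 0) := by
  rw [Subtype.dist_eq]
  show (1:ℝ)/4 ≤ dist (epE 0 s) (vtxE 0)
  rcases le_or_gt (s:ℝ) (1/2) with h | h
  · calc (1:ℝ)/4 ≤ |epE 0 s 0 - vtxE 0 0| := by
          have e1 : epE 0 (s:ℝ) 0 = 1 - s := by simp [epE, vtxE, p10, p01]
          have e2 : vtxE 0 0 = 0 := by simp [vtxE, p00]
          rw [e1, e2, sub_zero, abs_of_nonneg (by linarith [s.2.2])]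
          linarith
      _ ≤ _ := coord_dist_le _ _ 0
  · calc (1:ℝ)/4 ≤ |epE 0 s 1 - vtxE 0 1| := by
          have e1 : epE 0 (s:ℝ) 1 = s := by simp [epE, vtxE, p10, p01]
          have e2 : vtxE 0 1 = 0 := by simp [vtxE, p00]
          rw [e1, e2, sub_zero, abs_of_nonneg (by linarith [s.2.1])]
          linarith
      _ ≤ _ := coord_dist_le _ _ 1

lemma ep_far1 (s : I) : 1/4 ≤ dist (ep 1 s) (vtx 1) := by
  rw [Subtype.dist_eq]
  show (1:ℝ)/4 ≤ dist (epE 1 s) (vtxE 1)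
  calc (1:ℝ)/4 ≤ |epE 1 s 0 - vtxE 1 0| := by
        have e1 : epE 1 (s:ℝ) 0 = 0 := by simp [epE, vtxE, p00, p01]
        have e2 : vtxE 1 0 = 1 := by simp [vtxE, p10]
        rw [e1, e2]
        norm_num
    _ ≤ _ := coord_dist_le _ _ 0

lemma ep_far2 (s : I) : 1/4 ≤ dist (ep 2 s) (vtx 2) := by
  rw [Subtype.dist_eq]
  show (1:ℝ)/4 ≤ dist (epE 2 s) (vtxE 2)
  calc (1:ℝ)/4 ≤ |epE 2 s 1 - vtxE 2 1| := by
        have e1 : epE 2 (s:ℝ) 1 = 0 := by simp [epE, vtxE, p00, p10]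
        have e2 : vtxE 2 1 = 1 := by simp [vtxE, p01]
        rw [e1, e2]
        norm_num
    _ ≤ _ := coord_dist_le _ _ 1

lemma ep_far (i : Fin 3) (s : I) : 1/4 ≤ dist (ep i s) (vtx i) := by
  fin_cases i
  · exact ep_far0 s
  · exact ep_far1 s
  · exact ep_far2 s

lemma qt_far0 : 1/4 ≤ dist qt (vtx 0) := by
  rw [Subtype.dist_eq]
  show (1:ℝ)/4 ≤ dist (epE 2 (1/2)) (vtxE 0)
  calc (1:ℝ)/4 ≤ |epE 2 (1/2) 0 - vtxE 0 0| := by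
        have e1 : epE 2 ((1:ℝ)/2) 0 = 1/2 := by simp [epE, vtxE, p00, p10]
        have e2 : vtxE 0 0 = 0 := by simp [vtxE, p00]
        rw [e1, e2, sub_zero, abs_of_nonneg (by norm_num : (0:ℝ) ≤ 1/2)]
        norm_num
    _ ≤ _ := coord_dist_le _ _ 0

lemma qt_far1 : 1/4 ≤ dist qt (vtx 1) := by
  rw [Subtype.dist_eq]
  show (1:ℝ)/4 ≤ dist (epE 2 (1/2)) (vtxE 1)
  calc (1:ℝ)/4 ≤ |epE 2 (1/2) 0 - vtxE 1 0| := by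
        have e1 : epE 2 ((1:ℝ)/2) 0 = 1/2 := by simp [epE, vtxE, p00, p10]
        have e2 : vtxE 1 0 = 1 := by simp [vtxE, p10]
        rw [e1, e2, show |(1:ℝ)/2 - 1| = 1/2 by rw [abs_sub_comm, abs_of_nonneg] <;> norm_num]
        norm_num
    _ ≤ _ := coord_dist_le _ _ 0

lemma qt_far2 : 1/4 ≤ dist qt (vtx 2) := by
  rw [Subtype.dist_eq]
  show (1:ℝ)/4 ≤ dist (epE 2 (1/2)) (vtxE 2)
  calc (1:ℝ)/4 ≤ |epE 2 (1/2) 1 - vtxE 2 1| := by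
        have e1 : epE 2 ((1:ℝ)/2) 1 = 0 := by simp [epE, vtxE, p00, p10]
        have e2 : vtxE 2 1 = 1 := by simp [vtxE, p01]
        rw [e1, e2]
        norm_num
    _ ≤ _ := coord_dist_le _ _ 1

lemma ep_lip0 (a b : I) : dist (ep 0 a) (ep 0 b) ≤ 2 * |(a:ℝ) - b| := by
  rw [Subtype.dist_eq]
  refine le_trans (dist_le_coords _ _) ?_
  have e0 : ∀ s : I, ((ep 0 s : triangle) : E2) 0 = 1 - s := fun s => by simp [ep, epE, vtxE, p10, p01]
  have e1 : ∀ s : I, ((ep 0 s : triangle) : E2) 1 = (s:ℝ) := fun s => by simp [ep, epE, vtxE, p10, p01]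
  rw [e0 a, e0 b, e1 a, e1 b, show ((1:ℝ) - a) - (1 - b) = -((a:ℝ) - b) by ring, abs_neg]
  linarith [abs_nonneg ((a:ℝ) - b)]

lemma ep_lip1 (a b : I) : dist (ep 1 a) (ep 1 b) ≤ 2 * |(a:ℝ) - b| := by
  rw [Subtype.dist_eq]
  refine le_trans (dist_le_coords _ _) ?_
  have e0 : ∀ s : I, ((ep 1 s : triangle) : E2) 0 = 0 := fun s => by simp [ep, epE, vtxE, p00, p01]
  have e1 : ∀ s : I, ((ep 1 s : triangle) : E2) 1 = 1 - (s:ℝ) := fun s => by simp [ep, epE, vtxE, p00, p01]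
  rw [e0 a, e0 b, e1 a, e1 b, show ((1:ℝ) - a) - (1 - b) = -((a:ℝ) - b) by ring, abs_neg]
  simp
  linarith [abs_nonneg ((a:ℝ) - b)]

lemma ep_lip2 (a b : I) : dist (ep 2 a) (ep 2 b) ≤ 2 * |(a:ℝ) - b| := by
  rw [Subtype.dist_eq]
  refine le_trans (dist_le_coords _ _) ?_
  have e0 : ∀ s : I, ((ep 2 s : triangle) : E2) 0 = (s:ℝ) := fun s => by simp [ep, epE, vtxE, p00, p10]
  have e1 : ∀ s : I, ((ep 2 s : triangle) : E2) 1 = 0 := fun s => by simp [ep, epE, vtxE, p00, p10]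
  rw [e0 a, e0 b, e1 a, e1 b]
  simp
  linarith [abs_nonneg ((a:ℝ) - b)]

lemma ep_lip (i : Fin 3) (a b : I) : dist (ep i a) (ep i b) ≤ 2 * |(a:ℝ) - b| := by
  fin_cases i
  · exact ep_lip0 a b
  · exact ep_lip1 a b
  · exact ep_lip2 a b

end AUX_a2

section AUX_a3
def plantF (i : Fin 3) (s : I) : Fin 3 → triangle := fun j => if j = i then ep i s else vtx j

/-- dyadic value `min (r/3) (2^k) / 2^k` as an element of `I` -/
def dyad (k j : ℕ) : I :=
  ⟨(min j (2^k) : ℕ) / (2^k : ℝ), by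
    constructor
    · positivity
    · rw [div_le_one (by positivity)]
      exact_mod_cast Nat.cast_le.mpr (min_le_right j (2^k))⟩

def wslot (r : ℕ) : Fin 3 := ⟨r % 3, by omega⟩

/-- the enumeration of planted words -/
def wen (m : ℕ) : Fin 3 → triangle :=
  plantF (wslot m.unpair.2) (dyad m.unpair.1 (m.unpair.2 / 3))

def PP (t : ℕ) : Fin 3 → triangle := wen (padicValNat 2 (t + 1))

lemma mod4m1 (n : ℕ) : n % 4 - 1 < 3 := by omega

def sl (n : ℕ) : Fin 3 := ⟨n % 4 - 1, mod4m1 n⟩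

def mu (n : ℕ) : triangle :=
  if n % 4 = 0 then qt else PP (n / 4) (sl n)

lemma padic_stable {a : ℕ} (t : ℕ) {s : ℕ} (h : s + 1 < 2 ^ a) :
    padicValNat 2 (t * 2 ^ a + (s + 1)) = padicValNat 2 (s + 1) := by
  haveI : Fact (Nat.Prime 2) := ⟨Nat.prime_two⟩
  set b := padicValNat 2 (s + 1) with hb
  have hs0 : s + 1 ≠ 0 := by omega
  have hN0 : t * 2 ^ a + (s + 1) ≠ 0 := by positivity
  have hdvd : 2 ^ b ∣ s + 1 := pow_padicValNat_dvd
  have hba : b < a := by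
    by_contra hc
    push_neg at hc
    have : 2 ^ a ≤ 2 ^ b := Nat.pow_le_pow_right (by norm_num) hc
    have := Nat.le_of_dvd (by omega) hdvd
    omega
  have hnd : ¬ 2 ^ (b + 1) ∣ s + 1 := pow_succ_padicValNat_not_dvd hs0
  have hdvdN : 2 ^ b ∣ t * 2 ^ a + (s + 1) :=
    dvd_add (Dvd.dvd.mul_left (pow_dvd_pow 2 (le_of_lt hba)) t) hdvd
  have hndN : ¬ 2 ^ (b + 1) ∣ t * 2 ^ a + (s + 1) := by
    intro hcon
    have h2 : 2 ^ (b + 1) ∣ t * 2 ^ a :=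
      Dvd.dvd.mul_left (pow_dvd_pow 2 (by omega)) t
    exact hnd ((Nat.dvd_add_right h2).mp hcon)
  have h1 : b ≤ padicValNat 2 (t * 2 ^ a + (s + 1)) := by
    rcases (padicValNat_dvd_iff b (t * 2 ^ a + (s + 1))).mp hdvdN with h | h
    · omega
    · exact h
  have h2 : ¬ (b + 1 ≤ padicValNat 2 (t * 2 ^ a + (s + 1))) := by
    intro hc
    exact hndN ((padicValNat_dvd_iff (b + 1) (t * 2 ^ a + (s + 1))).mpr (Or.inr hc))
  omega

lemma PP_stable {a : ℕ} (t : ℕ) {s : ℕ} (h : s + 1 < 2 ^ a) :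
    PP (t * 2 ^ a + s) = PP s := by
  unfold PP
  rw [show t * 2 ^ a + s + 1 = t * 2 ^ a + (s + 1) by ring, padic_stable t h]

lemma mu_per {a : ℕ} (t : ℕ) {n : ℕ} (h : n + 1 < 2 ^ a) :
    mu (4 * 2 ^ a * t + n) = mu n := by
  have key : ∀ T : ℕ, T = 2 ^ a * t → mu (4 * T + n) = mu n := by
    intro T hT
    have hm : (4 * T + n) % 4 = n % 4 := by omega
    have hd : (4 * T + n) / 4 = T + n / 4 := by omega
    have hsl : sl (4 * T + n) = sl n := by
      unfold sl
      exact Fin.ext (by simp [hm])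
    have hPP : PP (T + n / 4) = PP (n / 4) := by
      rw [hT, mul_comm (2^a) t]
      exact PP_stable t (by omega)
    unfold mu
    rw [hm, hd, hsl, hPP]
  have := key (2 ^ a * t) rfl
  rw [show 4 * 2 ^ a * t = 4 * (2 ^ a * t) by ring]
  exact this

lemma mu_plant (m : ℕ) (c : ℕ) (hc : c < 3) :
    mu (4 * (2 ^ m - 1) + 1 + c) = wen m ⟨c, hc⟩ := by
  have h1 : (4 * (2 ^ m - 1) + 1 + c) % 4 = c + 1 := by omega
  have h2 : (4 * (2 ^ m - 1) + 1 + c) / 4 = 2 ^ m - 1 := by omega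
  have hsl : sl (4 * (2 ^ m - 1) + 1 + c) = ⟨c, hc⟩ := by
    unfold sl
    exact Fin.ext (by simp [h1])
  unfold mu
  rw [h1, hsl, h2, if_neg (by omega)]
  have h3 : PP (2 ^ m - 1) = wen m := by
    unfold PP
    have hpow : 1 ≤ 2 ^ m := Nat.one_le_two_pow
    rw [show 2 ^ m - 1 + 1 = 2 ^ m by omega]
    haveI : Fact (Nat.Prime 2) := ⟨Nat.prime_two⟩
    rw [padicValNat.prime_pow]
  rw [h3]

lemma mu_tail (m : ℕ) {j : ℕ} (h : j + 1 < 2 ^ m) :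
    mu (4 * (2 ^ m - 1) + 1 + (3 + j)) = mu j := by
  have hpow : 1 ≤ 2 ^ m := Nat.one_le_two_pow
  have harith : 4 * (2 ^ m - 1) + 1 + (3 + j) = 4 * 2 ^ m * 1 + j := by omega
  rw [harith]
  exact mu_per 1 h

end AUX_a3

section AUX_a4
lemma plantF_self (i : Fin 3) (s : I) : plantF i s i = ep i s := if_pos rfl

lemma plantF_other {i j : Fin 3} (h : j ≠ i) (s : I) : plantF i s j = vtx j := if_neg h

lemma mu_qt {n : ℕ} (h : n % 4 = 0) : mu n = qt := by unfold mu; rw [if_pos h]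

lemma window1 {k : ℕ} (hk : k % 4 = 1) (j : ℕ) (hj : j < 3) :
    mu (k + j) = PP (k / 4) ⟨j, hj⟩ := by
  unfold mu
  rw [if_neg (by omega), show (k + j) / 4 = k / 4 by omega,
    show sl (k + j) = ⟨j, hj⟩ from Fin.ext (by simp only [sl]; omega)]

lemma forb (k : ℕ) :
    1/4 ≤ dist (mu k) (vtx 0) ∨ 1/4 ≤ dist (mu (k+1)) (vtx 1) ∨
      1/4 ≤ dist (mu (k+2)) (vtx 2) := by
  have h4 : k % 4 = 0 ∨ k % 4 = 1 ∨ k % 4 = 2 ∨ k % 4 = 3 := by omega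
  rcases h4 with h | h | h | h
  · left; rw [mu_qt h]; exact qt_far0
  · obtain ⟨i, s, hPP⟩ : ∃ i s, PP (k / 4) = plantF i s := ⟨_, _, rfl⟩
    have key : mu (k + i.val) = ep i s := by
      rw [window1 h i.val i.isLt, hPP,
        show (⟨i.val, i.isLt⟩ : Fin 3) = i from Fin.ext rfl, plantF_self]
    rcases show i.val = 0 ∨ i.val = 1 ∨ i.val = 2 by omega with hv | hv | hv
    · left
      have hi : i = 0 := Fin.ext hv
      have hmu : mu k = ep i s := by rw [← key]; congr 1; omega
      rw [hmu, hi]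
      exact ep_far 0 s
    · right; left
      have hi : i = 1 := Fin.ext hv
      have hmu : mu (k + 1) = ep i s := by rw [← key]; congr 1; omega
      rw [hmu, hi]
      exact ep_far 1 s
    · right; right
      have hi : i = 2 := Fin.ext hv
      have hmu : mu (k + 2) = ep i s := by rw [← key]; congr 1; omega
      rw [hmu, hi]
      exact ep_far 2 s
  · right; right
    rw [mu_qt (show (k+2) % 4 = 0 by omega)]
    exact qt_far2
  · right; left
    rw [mu_qt (show (k+1) % 4 = 0 by omega)]
    exact qt_far1

def xseq : ℕ → triangle := fun n => if h : n < 3 then vtx ⟨n, h⟩ else mu (n - 3)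

def mstar (i : Fin 3) (s : I) : ℕ → triangle :=
  fun n => if h : n < 3 then plantF i s ⟨n, h⟩ else mu (n - 3)

lemma x_notin : xseq ∉ shiftOrbitClosure mu := by
  intro hx
  set U : Set (ℕ → triangle) :=
    {z | dist (z 0) (vtx 0) < 1/4 ∧ dist (z 1) (vtx 1) < 1/4 ∧ dist (z 2) (vtx 2) < 1/4} with hUdef
  have hU : IsOpen U := by
    have : U = ((fun z : ℕ → triangle => z 0) ⁻¹' Metric.ball (vtx 0) (1/4)) ∩
        (((fun z : ℕ → triangle => z 1) ⁻¹' Metric.ball (vtx 1) (1/4)) ∩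
        ((fun z : ℕ → triangle => z 2) ⁻¹' Metric.ball (vtx 2) (1/4))) := by
      ext z
      simp [hUdef, Metric.mem_ball]
    rw [this]
    exact ((Metric.isOpen_ball).preimage (continuous_apply 0)).inter
      (((Metric.isOpen_ball).preimage (continuous_apply 1)).inter
        ((Metric.isOpen_ball).preimage (continuous_apply 2)))
  have e : ∀ (j : ℕ) (h : j < 3), xseq j = vtx ⟨j, h⟩ := fun j h => dif_pos h
  have hxU : xseq ∈ U := by
    refine ⟨?_, ?_, ?_⟩
    · rw [e 0 (by omega)]; show dist (vtx 0) (vtx 0) < 1/4; simp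
    · rw [e 1 (by omega)]; show dist (vtx 1) (vtx 1) < 1/4; simp
    · rw [e 2 (by omega)]; show dist (vtx 2) (vtx 2) < 1/4; simp
  rcases mem_closure_iff.mp hx U hU hxU with ⟨z, hzU, ⟨k, hk⟩⟩
  rw [← hk] at hzU
  change shiftSeq^[k] mu ∈ U at hzU
  rw [shiftSeq_iterate] at hzU
  obtain ⟨h0, h1, h2⟩ := hzU
  simp only [hUdef, mem_setOf_eq] at h0 h1 h2
  rw [show 0 + k = k by omega] at h0
  rw [show 1 + k = k + 1 by omega] at h1
  rw [show 2 + k = k + 2 by omega] at h2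
  rcases forb k with h | h | h <;> linarith

lemma mu_mem_orbitClosure_xseq : mu ∈ shiftOrbitClosure xseq := by
  have : shiftSeq^[3] xseq = mu := by
    rw [shiftSeq_iterate]
    funext n
    show xseq (n + 3) = mu n
    rw [show xseq (n+3) = mu (n + 3 - 3) from dif_neg (by omega)]
    norm_num
  rw [← this]
  exact shift_iter_mem_shiftOrbitClosure _ 3

lemma not_minimal_xseq : ¬ IsMinimalSeq xseq := by
  intro hmin
  exact x_notin (hmin mu mu_mem_orbitClosure_xseq (self_mem_shiftOrbitClosure xseq))

end AUX_a4

section AUX_a5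
lemma dyad_coe (k j : ℕ) (hj : j ≤ 2^k) : (dyad k j : ℝ) = (j : ℝ) / 2^k := by
  simp [dyad, Nat.min_eq_left hj]

lemma mstar_mem (i : Fin 3) (s : I) : mstar i s ∈ shiftOrbitClosure mu := by
  apply mem_closure_range_of_windows
  intro ε hε N
  obtain ⟨k0, hk0⟩ := exists_pow_lt_of_lt_one (show (0:ℝ) < ε/4 by linarith)
    (show (1:ℝ)/2 < 1 by norm_num)
  set k := max N k0 with hkdef
  have hpow2 : (0:ℝ) < 2^k := by positivity
  have hhalf : ((1:ℝ)/2)^k ≤ (1/2)^k0 :=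
    pow_le_pow_of_le_one (by norm_num) (by norm_num) (le_max_right _ _)
  set j := ⌊(s:ℝ) * 2^k⌋₊ with hjdef
  have hjle : (j:ℝ) ≤ (s:ℝ) * 2^k := Nat.floor_le (mul_nonneg s.2.1 (by positivity))
  have hjgt : (s:ℝ) * 2^k < j + 1 := Nat.lt_floor_add_one _
  have hj2 : j ≤ 2^k := by
    have h1 : (s:ℝ) * 2^k ≤ 2^k := by
      nlinarith [s.2.1, s.2.2]
    have : (j:ℝ) ≤ ((2^k : ℕ) : ℝ) := by push_cast; linarith
    exact_mod_cast this
  have hpw : ((1:ℝ)/2)^k = 1/2^k := by rw [div_pow, one_pow]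
  have happrox : |(s:ℝ) - (dyad k j : ℝ)| ≤ (1/2)^k := by
    rw [dyad_coe k j hj2, abs_le, hpw]
    have e1 : (j:ℝ)/2^k ≤ s := by rw [div_le_iff₀ hpow2]; linarith
    have e2 : (s:ℝ) ≤ (j:ℝ)/2^k + 1/2^k := by
      rw [← add_div, le_div_iff₀ hpow2]; linarith
    constructor <;> linarith
  set m := Nat.pair k (3 * j + i.val) with hmdef
  have hm_unpair : m.unpair = (k, 3 * j + i.val) := Nat.unpair_pair _ _
  have hwen : wen m = plantF i (dyad k j) := by
    unfold wen
    rw [hm_unpair]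
    have h1 : wslot (3 * j + i.val) = i := Fin.ext (by simp [wslot])
    have h2 : (3 * j + i.val) / 3 = j := by omega
    rw [h1, h2]
  have hkm : k ≤ m := Nat.left_le_pair _ _
  have hNm : N < 2 ^ m := by
    calc N ≤ k := le_max_left _ _
      _ ≤ m := hkm
      _ < 2 ^ m := Nat.lt_two_pow_self
  refine ⟨4 * (2 ^ m - 1) + 1, fun n hn => ?_⟩
  simp only [shiftSeq_iterate]
  by_cases h3 : n < 3
  · have hplant : mu (n + (4 * (2 ^ m - 1) + 1)) = wen m ⟨n, h3⟩ := by
      rw [show n + (4 * (2 ^ m - 1) + 1) = 4 * (2 ^ m - 1) + 1 + n by omega]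
      exact mu_plant m n h3
    rw [hplant, hwen]
    rw [show mstar i s n = plantF i s ⟨n, h3⟩ from dif_pos h3]
    by_cases hni : (⟨n, h3⟩ : Fin 3) = i
    · rw [hni, plantF_self, plantF_self]
      calc dist (ep i s) (ep i (dyad k j)) ≤ 2 * |(s:ℝ) - (dyad k j : ℝ)| := ep_lip i s _
        _ ≤ 2 * (1/2)^k := by linarith [happrox]
        _ ≤ 2 * (1/2)^k0 := by linarith [hhalf]
        _ < ε := by linarith [hk0]
    · rw [plantF_other hni, plantF_other hni]
      simpa using hε
  · have htail : mu (n + (4 * (2 ^ m - 1) + 1)) = mu (n - 3) := by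
      rw [show n + (4 * (2 ^ m - 1) + 1) = 4 * (2 ^ m - 1) + 1 + (3 + (n - 3)) by omega]
      exact mu_tail m (by omega)
    rw [htail, show mstar i s n = mu (n - 3) from dif_neg h3]
    simpa using hε

lemma mu_min {w : ℕ → triangle} (hw : w ∈ shiftOrbitClosure mu) :
    mu ∈ shiftOrbitClosure w := by
  apply mem_closure_range_of_windows
  intro ε hε N
  set a := N + 1 with hadef
  set Pi := 4 * 2 ^ a with hPidef
  have hPi0 : 0 < Pi := by positivity
  obtain ⟨K, hK⟩ := windows_of_mem_closure_range hw ε hε (Pi + N)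
  simp only [shiftSeq_iterate] at hK
  set pos := Pi * (K / Pi + 1) with hposdef
  have hdm := Nat.div_add_mod K Pi
  have hmlt : K % Pi < Pi := Nat.mod_lt _ hPi0
  have hKpos : K ≤ pos := by
    have : Pi * (K / Pi + 1) = Pi * (K / Pi) + Pi := by ring
    omega
  have hjPi : pos - K ≤ Pi := by
    have : Pi * (K / Pi + 1) = Pi * (K / Pi) + Pi := by ring
    omega
  refine ⟨pos - K, fun n hn => ?_⟩
  simp only [shiftSeq_iterate]
  have hper : mu (pos + n) = mu n := by
    rw [hposdef, hPidef]
    exact mu_per _ (by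
      have h2a : N + 1 < 2 ^ a := by rw [hadef]; exact Nat.lt_two_pow_self
      omega)
  have harith : n + (pos - K) + K = pos + n := by omega
  have := hK (n + (pos - K)) (by omega)
  rw [harith, hper] at this
  rw [dist_comm]
  exact this

lemma M_min {w : ℕ → triangle} (hw : w ∈ shiftOrbitClosure mu) :
    shiftOrbitClosure mu ⊆ shiftOrbitClosure w :=
  shiftOrbitClosure_subset (mu_min hw)

lemma isCompact_triangle : IsCompact triangle := by
  have hseg : ∀ x y : E2, IsCompact (segment ℝ x y) := fun x y => by
    rw [segment_eq_image]
    exact isCompact_Icc.image (by continuity)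
  exact ((hseg _ _).union (hseg _ _)).union (hseg _ _)

instance : CompactSpace triangle := isCompact_iff_compactSpace.mp isCompact_triangle

def Fm (f : triangle → I) : (ℕ → triangle) → (ℕ → I) := fun z n => f (z n)

lemma Fm_cont {f : triangle → I} (hf : Continuous f) : Continuous (Fm f) :=
  continuous_pi fun n => hf.comp (continuous_apply n)

lemma Fm_iter (f : triangle → I) (z : ℕ → triangle) (k : ℕ) :
    shiftSeq^[k] (Fm f z) = Fm f (shiftSeq^[k] z) := by
  rw [shiftSeq_iterate, shiftSeq_iterate]
  rfl

lemma orbitClosure_Fm {f : triangle → I} (hf : Continuous f) {m : ℕ → triangle}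
    (hm : m ∈ shiftOrbitClosure mu) :
    shiftOrbitClosure (Fm f m) = Fm f '' shiftOrbitClosure mu := by
  have hMcpt : IsCompact (shiftOrbitClosure mu) := IsClosed.isCompact isClosed_closure
  apply le_antisymm
  · apply closure_minimal
    · rintro _ ⟨k, rfl⟩
      exact ⟨shiftSeq^[k] m, shift_mem_of_mem hm k, (Fm_iter f m k).symm⟩
    · exact (hMcpt.image (Fm_cont hf)).isClosed
  · rintro _ ⟨m', hm', rfl⟩
    have h1 : m' ∈ shiftOrbitClosure m := M_min hm hm'
    have h2 : Fm f m' ∈ Fm f '' closure (Set.range fun k => shiftSeq^[k] m) :=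
      mem_image_of_mem _ h1
    have h3 := image_closure_subset_closure_image (Fm_cont hf) h2
    have hsub : Fm f '' (Set.range fun k => shiftSeq^[k] m) ⊆
        Set.range fun k => shiftSeq^[k] (Fm f m) := by
      rintro _ ⟨_, ⟨k, rfl⟩, rfl⟩
      exact ⟨k, Fm_iter f m k⟩
    exact closure_mono hsub h3

lemma isMinimal_Fm {f : triangle → I} (hf : Continuous f) {m : ℕ → triangle}
    (hm : m ∈ shiftOrbitClosure mu) : IsMinimalSeq (Fm f m) := by
  intro w hw
  rw [orbitClosure_Fm hf hm] at hw
  obtain ⟨m', hm', rfl⟩ := hw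
  rw [orbitClosure_Fm hf hm, orbitClosure_Fm hf hm']

lemma median (G : Fin 3 → ℝ) : ∃ i : Fin 3, G i ∈ uIcc (G (i+1)) (G (i+2)) := by
  rcases le_total (G 0) (G 1) with h01 | h01 <;>
    rcases le_total (G 1) (G 2) with h12 | h12 <;>
    rcases le_total (G 0) (G 2) with h02 | h02
  · exact ⟨1, by show G 1 ∈ uIcc (G 2) (G 0); rw [mem_uIcc]; exact Or.inr ⟨h01, h12⟩⟩
  · exact ⟨1, by show G 1 ∈ uIcc (G 2) (G 0); rw [mem_uIcc]; exact Or.inr ⟨h01, h12⟩⟩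
  · exact ⟨2, by show G 2 ∈ uIcc (G 0) (G 1); rw [mem_uIcc]; exact Or.inl ⟨h02, h12⟩⟩
  · exact ⟨0, by show G 0 ∈ uIcc (G 1) (G 2); rw [mem_uIcc]; exact Or.inr ⟨h02, h01⟩⟩
  · exact ⟨0, by show G 0 ∈ uIcc (G 1) (G 2); rw [mem_uIcc]; exact Or.inl ⟨h01, h02⟩⟩
  · exact ⟨2, by show G 2 ∈ uIcc (G 0) (G 1); rw [mem_uIcc]; exact Or.inr ⟨h12, h02⟩⟩
  · exact ⟨1, by show G 1 ∈ uIcc (G 2) (G 0); rw [mem_uIcc]; exact Or.inl ⟨h12, h01⟩⟩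
  · exact ⟨1, by show G 1 ∈ uIcc (G 2) (G 0); rw [mem_uIcc]; exact Or.inl ⟨h12, h01⟩⟩

lemma ep_zero (i : Fin 3) : ep i 0 = vtx (i+1) := Subtype.ext (by simp [ep, epE, vtx])

lemma ep_one (i : Fin 3) : ep i 1 = vtx (i+2) := Subtype.ext (by simp [ep, epE, vtx])

lemma ep_continuous (i : Fin 3) : Continuous (ep i) := by
  apply Continuous.subtype_mk
  exact ((continuous_const.sub continuous_subtype_val).smul continuous_const).add
    (continuous_subtype_val.smul continuous_const)

lemma exists_match (f : triangle → I) (hf : Continuous f) :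
    ∃ (i : Fin 3) (s : I), f (ep i s) = f (vtx i) := by
  set G : Fin 3 → ℝ := fun i => (f (vtx i) : ℝ) with hGdef
  obtain ⟨i, hi⟩ := median G
  set φ : ℝ → ℝ := fun t => (f (ep i (projIcc (0:ℝ) 1 zero_le_one t)) : ℝ) with hφdef
  have hcont : Continuous φ :=
    continuous_subtype_val.comp (hf.comp ((ep_continuous i).comp continuous_projIcc))
  have hp0 : projIcc (0:ℝ) 1 zero_le_one 0 = (0:I) := by
    rw [Set.projIcc_left]; exact Subtype.ext rfl
  have hp1 : projIcc (0:ℝ) 1 zero_le_one 1 = (1:I) := by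
    rw [Set.projIcc_right]; exact Subtype.ext rfl
  have h0 : φ 0 = G (i+1) := by rw [hφdef]; simp only [hp0, ep_zero]; rfl
  have h1 : φ 1 = G (i+2) := by rw [hφdef]; simp only [hp1, ep_one]; rfl
  have key := intermediate_value_uIcc (a := (0:ℝ)) (b := 1) hcont.continuousOn
  rw [h0, h1] at key
  obtain ⟨t, _, hft⟩ := key hi
  exact ⟨i, projIcc (0:ℝ) 1 zero_le_one t, Subtype.coe_injective hft⟩

end AUX_a5
/-- `[0,1]` is not a minimality detector for the triangle: there is a
non-minimal sequence in the triangle whose image under every continuous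
`f : T → [0,1]` is minimal. -/
theorem unitInterval_not_minimality_detector_for_triangle :
    ∃ x : ℕ → triangle, ¬ IsMinimalSeq x ∧
      ∀ f : triangle → I, Continuous f → IsMinimalSeq (fun n => f (x n)) := by
  refine ⟨xseq, not_minimal_xseq, ?_⟩
  intro f hf
  obtain ⟨i, s, hmatch⟩ := exists_match f hf
  have hx : (fun n => f (xseq n)) = Fm f (mstar i s) := by
    funext n
    show f (xseq n) = f (mstar i s n)
    by_cases h : n < 3
    · rw [show xseq n = vtx ⟨n, h⟩ from dif_pos h,
        show mstar i s n = plantF i s ⟨n, h⟩ from dif_pos h]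
      by_cases hni : (⟨n, h⟩ : Fin 3) = i
      · rw [hni, plantF_self]
        exact hmatch.symm
      · rw [plantF_other hni]
    · rw [show xseq n = mu (n - 3) from dif_neg h,
        show mstar i s n = mu (n - 3) from dif_neg h]
  rw [hx]
  exact isMinimal_Fm hf (mstar_mem i s)

end
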